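/- For s ≥ 2, cub(TCC(a₁, a₂, …, a_s)) ≤ cub(TCC(a₁, a₂, …, a_{s−1})) + a_s. -/

import Mathlib

/-- An interval graph: adjacency given by intersection of closed real intervals. -/
def IsIntervalGraph {V : Type*} (I : SimpleGraph V) : Prop :=
  ∃ a b : V → ℝ, ∀ u v : V,
    I.Adj u v ↔ u ≠ v ∧ (Set.Icc (a u) (b u) ∩ Set.Icc (a v) (b v)).Nonempty

/-- A unit interval graph: adjacency given by intersection of closed unit intervals. -/
def IsUnitIntervalGraph {V : Type*} (I : SimpleGraph V) : Prop :=
  ∃ a : V → ℝ, ∀ u v : V,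
    I.Adj u v ↔ u ≠ v ∧ (Set.Icc (a u) (a u + 1) ∩ Set.Icc (a v) (a v + 1)).Nonempty

/-- Boxicity: least `k` such that `G` is the intersection of `k` interval graphs. -/
noncomputable def boxicity {V : Type*} (G : SimpleGraph V) : ℕ :=
  sInf {k | ∃ I : Fin k → SimpleGraph V, (∀ i, IsIntervalGraph (I i)) ∧
    ∀ u v, G.Adj u v ↔ (u ≠ v ∧ ∀ i, (I i).Adj u v)}

/-- Cubicity: least `k` such that `G` is the intersection of `k` unit interval graphs. -/
noncomputable def cubicity {V : Type*} (G : SimpleGraph V) : ℕ :=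
  sInf {k | ∃ I : Fin k → SimpleGraph V, (∀ i, IsUnitIntervalGraph (I i)) ∧
    ∀ u v, G.Adj u v ↔ (u ≠ v ∧ ∀ i, (I i).Adj u v)}

/-- Transitive closure of the Cartesian product of complete graphs `K_{m i + 1}`. -/
def TCC {d : ℕ} (m : Fin d → ℕ) : SimpleGraph (∀ i, Fin (m i + 1)) where
  Adj x y := x ≠ y ∧ ((∀ i, (x i : ℕ) ≤ y i) ∨ (∀ i, (y i : ℕ) ≤ x i))
  symm := ⟨fun _ _ h => ⟨h.1.symm, h.2.symm⟩⟩
  loopless := ⟨fun _ h => h.1 rfl⟩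

/-- Transitive closure of the `s`-dimensional hypercube. -/
def TCH (s : ℕ) : SimpleGraph (∀ _ : Fin s, Fin 2) := TCC (fun _ => 1)

lemma unit_inter_iff (x y : ℝ) :
    (Set.Icc x (x+1) ∩ Set.Icc y (y+1)).Nonempty ↔ |x - y| ≤ 1 := by
  rw [Set.Icc_inter_Icc, Set.nonempty_Icc, abs_sub_le_iff, le_min_iff, max_le_iff, max_le_iff]
  constructor
  · rintro ⟨⟨h1, h2⟩, h3, h4⟩; constructor <;> linarith
  · rintro ⟨h1, h2⟩; refine ⟨⟨?_, ?_⟩, ?_, ?_⟩ <;> linarith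

noncomputable def unitRep {V : Type*} (g : V → ℝ) : SimpleGraph V :=
  SimpleGraph.fromRel (fun u v => |g u - g v| ≤ 1)

lemma unitRep_adj {V : Type*} (g : V → ℝ) (u v : V) :
    (unitRep g).Adj u v ↔ u ≠ v ∧ |g u - g v| ≤ 1 := by
  simp [unitRep, SimpleGraph.fromRel_adj, abs_sub_comm (g v) (g u)]

lemma unitRep_isUnit {V : Type*} (g : V → ℝ) : IsUnitIntervalGraph (unitRep g) :=
  ⟨g, fun u v => by rw [unitRep_adj, unit_inter_iff]⟩

lemma cubicity_set_nonempty {V : Type*} [Fintype V] (G : SimpleGraph V) :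
    {k | ∃ I : Fin k → SimpleGraph V, (∀ i, IsUnitIntervalGraph (I i)) ∧
      ∀ u v, G.Adj u v ↔ (u ≠ v ∧ ∀ i, (I i).Adj u v)}.Nonempty := by
  classical
  let e := (Fintype.equivFin (V × V)).symm
  let w : V × V → V → ℝ := fun p x =>
    if G.Adj p.1 p.2 ∨ p.1 = p.2 then 0
    else if x = p.1 then 0 else if x = p.2 then 2 else 1
  refine ⟨Fintype.card (V × V), fun i => unitRep (w (e i)), fun i => unitRep_isUnit _, ?_⟩
  intro u v
  constructor
  · intro h
    refine ⟨h.ne, fun i => (unitRep_adj _ _ _).mpr ⟨h.ne, ?_⟩⟩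
    set p := e i with hp
    by_cases hcase : G.Adj p.1 p.2 ∨ p.1 = p.2
    · simp [w, hcase]
    · have h1 : ¬(u = p.1 ∧ v = p.2) := by rintro ⟨rfl, rfl⟩; exact hcase (Or.inl h)
      have h2 : ¬(v = p.1 ∧ u = p.2) := by rintro ⟨rfl, rfl⟩; exact hcase (Or.inl h.symm)
      simp only [w, if_neg hcase]
      split_ifs <;> first
        | (exfalso; tauto)
        | norm_num
  · rintro ⟨hne, hall⟩
    by_contra hadj
    have hkey := ((unitRep_adj _ _ _).mp (hall (e.symm (u, v)))).2
    have he : e (e.symm (u, v)) = (u, v) := Equiv.apply_symm_apply _ _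
    rw [he] at hkey
    have hc : ¬(G.Adj u v ∨ u = v) := by rintro (h | h) <;> [exact hadj h; exact hne h]
    have hwu : w (u, v) u = 0 := by simp [w, hc]
    have hwv : w (u, v) v = 2 := by simp [w, hc, hne.symm]
    rw [hwu, hwv] at hkey
    norm_num at hkey

theorem cubicity_TCC_rec {n : ℕ} (hn : 1 ≤ n) (a : Fin (n + 1) → ℕ) :
    cubicity (TCC a) ≤ cubicity (TCC (Fin.init a)) + a (Fin.last n) := by
  classical
  set k := cubicity (TCC (Fin.init a)) with hk
  set m := a (Fin.last n) with hm
  have hmem : ∃ I : Fin k → SimpleGraph (∀ i : Fin n, Fin (Fin.init a i + 1)),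
      (∀ i, IsUnitIntervalGraph (I i)) ∧
      ∀ u v, (TCC (Fin.init a)).Adj u v ↔ (u ≠ v ∧ ∀ i, (I i).Adj u v) :=
    Nat.sInf_mem (cubicity_set_nonempty (TCC (Fin.init a)))
  obtain ⟨I, hI, hIadj⟩ := hmem
  choose f hf using hI
  -- σ and constants
  set σ : (∀ i : Fin (n+1), Fin (a i + 1)) → ℕ :=
    fun x => ∑ i : Fin n, (x i.castSucc : ℕ) with hσdef
  set S : ℕ := ∑ i : Fin n, a i.castSucc with hSdef
  set ε : ℝ := 1 / (2 * ((S : ℝ) + 1)) with hεdef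
  have hεpos : 0 < ε := by rw [hεdef]; positivity
  have hεS : ε * S ≤ 1/2 := by
    rw [hεdef, div_mul_eq_mul_div, one_mul, div_le_div_iff₀ (by positivity) (by norm_num)]
    have : (0:ℝ) ≤ (S:ℝ) := Nat.cast_nonneg _
    linarith
  have hσS : ∀ x, (σ x : ℝ) ≤ S := by
    intro x
    have h1 : σ x ≤ S := Finset.sum_le_sum (fun i _ => Fin.is_le _)
    exact_mod_cast h1
  have hσ0 : ∀ x, (0:ℝ) ≤ (σ x : ℝ) := fun x => Nat.cast_nonneg _
  -- the family of interval positions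
  set g : Fin (k + m) → (∀ i : Fin (n+1), Fin (a i + 1)) → ℝ :=
    fun i => Fin.addCases (fun j x => f j (Fin.init x))
      (fun c x => (if (c : ℕ) + 1 ≤ (x (Fin.last n) : ℕ) then (1:ℝ) else 0) - ε * (σ x : ℝ)) i
    with hgdef
  have hgl : ∀ (j : Fin k) x, g (Fin.castAdd m j) x = f j (Fin.init x) := by
    intro j x; simp [hgdef]
  have hgr : ∀ (c : Fin m) x, g (Fin.natAdd k c) x =
      (if (c : ℕ) + 1 ≤ (x (Fin.last n) : ℕ) then (1:ℝ) else 0) - ε * (σ x : ℝ) := by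
    intro c x; simp [hgdef]
  -- comparability of initial segments vs the first k constraints
  have hcomp : ∀ p q : (∀ i : Fin n, Fin (Fin.init a i + 1)),
      ((∀ i, (p i : ℕ) ≤ q i) ∨ (∀ i, (q i : ℕ) ≤ p i)) ↔ ∀ j, |f j p - f j q| ≤ 1 := by
    intro p q
    by_cases hpq : p = q
    · subst hpq; simp
    · constructor
      · intro h j
        have hadj : (TCC (Fin.init a)).Adj p q := ⟨hpq, h⟩
        have h2 := ((hIadj p q).mp hadj).2 j
        rw [hf j, unit_inter_iff] at h2
        exact h2.2
      · intro h
        have hadj : (TCC (Fin.init a)).Adj p q :=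
          (hIadj p q).mpr ⟨hpq, fun j => (hf j p q).mpr ⟨hpq, (unit_inter_iff _ _).mpr (h j)⟩⟩
        exact hadj.2
  -- monotonicity of σ
  have hσ_le : ∀ u v : (∀ i : Fin (n+1), Fin (a i + 1)),
      (∀ i : Fin n, (u i.castSucc : ℕ) ≤ v i.castSucc) → σ u ≤ σ v :=
    fun u v h => Finset.sum_le_sum fun i _ => h i
  have hσ_lt : ∀ u v : (∀ i : Fin (n+1), Fin (a i + 1)),
      (∀ i : Fin n, (u i.castSucc : ℕ) ≤ v i.castSucc) →
      Fin.init u ≠ Fin.init v → σ u < σ v := by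
    intro u v h hne
    obtain ⟨i, hi⟩ : ∃ i : Fin n, u i.castSucc ≠ v i.castSucc := by
      by_contra hc; push_neg at hc
      exact hne (funext fun i => hc i)
    exact Finset.sum_lt_sum (fun i _ => h i)
      ⟨i, Finset.mem_univ i, lt_of_le_of_ne (h i) (fun he => hi (Fin.ext he))⟩
  -- forward claim
  have fwd : ∀ u v : (∀ i : Fin (n+1), Fin (a i + 1)),
      (∀ i, (u i : ℕ) ≤ v i) → ∀ i : Fin (k + m), |g i u - g i v| ≤ 1 := by
    intro u v huv i
    refine Fin.addCases (fun j => ?_) (fun c => ?_) i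
    · simp only [hgl]
      exact (hcomp _ _).mp (Or.inl fun i => huv i.castSucc) j
    · simp only [hgr]
      have h1 : 0 ≤ ε * ((σ v : ℝ) - σ u) := by
        have := hσ_le u v (fun i => huv i.castSucc)
        have hc : (σ u : ℝ) ≤ σ v := by exact_mod_cast this
        nlinarith
      have h2 : ε * ((σ v : ℝ) - σ u) ≤ 1/2 := by
        have hb : (σ v : ℝ) - σ u ≤ S := by linarith [hσS v, hσ0 u]
        nlinarith
      have e1 : ε * ((σ v : ℝ) - σ u) = ε * (σ v : ℝ) - ε * (σ u : ℝ) := by ring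
      have hlast : (u (Fin.last n) : ℕ) ≤ (v (Fin.last n) : ℕ) := huv _
      split_ifs with hu hv hv
      · rw [abs_le]; constructor <;> linarith
      · exact absurd (hu.trans hlast) hv
      · rw [abs_le]; constructor <;> linarith
      · rw [abs_le]; constructor <;> linarith
  -- backward claim: with initial segments comparable and strict, last coords align
  have bwd : ∀ u v : (∀ i : Fin (n+1), Fin (a i + 1)),
      (∀ c : Fin m, |g (Fin.natAdd k c) u - g (Fin.natAdd k c) v| ≤ 1) →
      (∀ i : Fin n, (u i.castSucc : ℕ) ≤ v i.castSucc) →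
      Fin.init u ≠ Fin.init v → ∀ i : Fin (n+1), (u i : ℕ) ≤ v i := by
    intro u v hg hinit hne
    have hlast : (u (Fin.last n) : ℕ) ≤ (v (Fin.last n) : ℕ) := by
      by_contra hlt
      push_neg at hlt
      have hcm : ((v (Fin.last n) : ℕ)) < m := lt_of_lt_of_le hlt (Fin.is_le _)
      set c : Fin m := ⟨(v (Fin.last n) : ℕ), hcm⟩ with hc
      have hcon := hg c
      simp only [hgr] at hcon
      have hcval : (c : ℕ) = (v (Fin.last n) : ℕ) := rfl
      have hcu : (c : ℕ) + 1 ≤ (u (Fin.last n) : ℕ) := by omega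
      have hcv : ¬ ((c : ℕ) + 1 ≤ (v (Fin.last n) : ℕ)) := by omega
      rw [if_pos hcu, if_neg hcv] at hcon
      have hslt := hσ_lt u v hinit hne
      have hslt' : (σ u : ℝ) < σ v := by exact_mod_cast hslt
      have : ε * (σ u : ℝ) < ε * σ v := by nlinarith
      rw [abs_le] at hcon
      have := hcon.2
      linarith
    intro i
    refine Fin.lastCases ?_ ?_ i
    · exact hlast
    · exact hinit
  -- assemble
  apply Nat.sInf_le
  refine ⟨fun i => unitRep (g i), fun i => unitRep_isUnit _, ?_⟩
  intro u v
  constructor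
  · rintro ⟨hne, hcmp⟩
    refine ⟨hne, fun i => (unitRep_adj _ _ _).mpr ⟨hne, ?_⟩⟩
    rcases hcmp with h | h
    · exact fwd u v h i
    · rw [abs_sub_comm]; exact fwd v u h i
  · rintro ⟨hne, hall⟩
    refine ⟨hne, ?_⟩
    have hg : ∀ i, |g i u - g i v| ≤ 1 := fun i => ((unitRep_adj _ _ _).mp (hall i)).2
    by_cases hiv : Fin.init u = Fin.init v
    · have heq : ∀ i : Fin n, (u i.castSucc : ℕ) = (v i.castSucc : ℕ) := by
        intro i
        have := congrFun hiv i
        exact congrArg Fin.val this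
      rcases le_total ((u (Fin.last n) : ℕ)) ((v (Fin.last n) : ℕ)) with h | h
      · left; intro i
        refine Fin.lastCases ?_ ?_ i
        · exact h
        · exact fun j => le_of_eq (heq j)
      · right; intro i
        refine Fin.lastCases ?_ ?_ i
        · exact h
        · exact fun j => le_of_eq (heq j).symm
    · have hcmpi := (hcomp (Fin.init u) (Fin.init v)).mpr
        (fun j => by have := hg (Fin.castAdd m j); simpa only [hgl] using this)
      rcases hcmpi with h | h
      · left
        exact bwd u v (fun c => hg (Fin.natAdd k c)) h hiv
      · right
        refine bwd v u (fun c => ?_) h (Ne.symm hiv)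
        rw [abs_sub_comm]; exact hg (Fin.natAdd k c)
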